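/- For every integer n ≥ 0 and fixed integer j with |j| ≤ 2n, μ_{2n+4}(j) = (3+4i) · [(n+1)(n+2)(n+1/2)(n+3/2)(n+7/4)] / [(n−j/2+2)(n+j/2+2)(n−j/2+3/2)(n+j/2+3/2)(n+3/4)] · μ_{2n}(j) − (2+4i) · [(n+2)(n+3/2)(n+5/4) · (n² + (3/20)j² + (5/2)n + 51/40 + i((4/20)j² − 1/20))] / [(n−j/2+2)(n+j/2+2)(n−j/2+3/2)(n+j/2+3/2)(n+3/4)] · μ_{2n+2}(j). Similarly, for every integer n ≥ 0 and fixed integer j with |j| ≤ 2n+1, μ_{2n+5}(j) = (3+4i) · [(n+1)(n+2)(n+3/2)(n+5/2)(n+9/4)] / [(n−j/2+2)(n+j/2+2)(n−j/2+5/2)(n+j/2+5/2)(n+5/4)] · μ_{2n+1}(j) − (2+4i) · [(n+2)(n+5/2)(n+7/4) · (n² + (3/20)j² + (7/2)n + 111/40 + i((4/20)j² − 1/20))] / [(n−j/2+2)(n+j/2+2)(n−j/2+5/2)(n+j/2+5/2)(n+5/4)] · μ_{2n+3}(j). -/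

import Mathlib

open Complex

/-- The complex amplitude `μ_ℓ(j)`. -/
noncomputable def amp (ℓ : ℕ) (j : ℤ) : ℂ :=
  if j.natAbs ≤ ℓ then
    ∑ r ∈ Finset.range (ℓ - j.natAbs + 1),
      if 2 ∣ ((ℓ : ℤ) - r + j) then
        (ℓ.choose r : ℂ) * ((ℓ - r).choose ((((ℓ : ℤ) - r + j) / 2).toNat) : ℂ) *
          (Complex.I / 2) ^ (ℓ - r) * (1 - Complex.I) ^ r
      else 0
  else 0

open Complex Polynomial

noncomputable def Pp : Polynomial ℂ :=
  Polynomial.C (Complex.I/2) + Polynomial.C (1-Complex.I) * Polynomial.X +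
    Polynomial.C (Complex.I/2) * Polynomial.X ^ 2

noncomputable def cf (q : Polynomial ℂ) (t : ℤ) : ℂ :=
  if 0 ≤ t then q.coeff t.toNat else 0

noncomputable def av (ℓ : ℕ) (t : ℤ) : ℂ := cf (Pp ^ ℓ) t

lemma cf_add (q r : Polynomial ℂ) (t : ℤ) : cf (q + r) t = cf q t + cf r t := by
  unfold cf; split <;> simp

lemma cf_Cmul (c : ℂ) (q : Polynomial ℂ) (t : ℤ) :
    cf (Polynomial.C c * q) t = c * cf q t := by
  unfold cf; split <;> simp [Polynomial.coeff_C_mul]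

lemma cf_Xmul (q : Polynomial ℂ) (t : ℤ) : cf (Polynomial.X * q) t = cf q (t - 1) := by
  unfold cf
  rcases lt_trichotomy t 0 with h | h | h
  · rw [if_neg (by omega), if_neg (by omega)]
  · subst h
    rw [if_pos le_rfl, if_neg (by omega)]
    simpa using Polynomial.mul_coeff_zero Polynomial.X q
  · rw [if_pos (by omega), if_pos (by omega)]
    have h1 : t.toNat = (t - 1).toNat + 1 := by omega
    rw [h1, Polynomial.coeff_X_mul]

lemma cf_deriv (q : Polynomial ℂ) (t : ℤ) :
    cf (Polynomial.derivative q) t = ((t : ℂ) + 1) * cf q (t + 1) := by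
  unfold cf
  rcases lt_trichotomy t (-1) with h | h | h
  · rw [if_neg (by omega), if_neg (by omega)]; ring
  · subst h; rw [if_neg (by omega)]; push_cast; ring
  · rw [if_pos (by omega), if_pos (by omega)]
    rw [Polynomial.coeff_derivative]
    have h1 : (t + 1).toNat = t.toNat + 1 := by omega
    rw [h1]
    have h2 : ((t.toNat : ℕ) : ℂ) = (t : ℂ) := by
      exact_mod_cast congrArg (Int.cast : ℤ → ℂ) (by omega : (t.toNat : ℤ) = t)
    rw [h2]; ring

lemma cf_mulP (q : Polynomial ℂ) (t : ℤ) :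
    cf (Pp * q) t = Complex.I/2 * cf q t + (1 - Complex.I) * cf q (t - 1)
      + Complex.I/2 * cf q (t - 2) := by
  have hP : Pp * q = Polynomial.C (Complex.I/2) * q
      + Polynomial.C (1 - Complex.I) * (Polynomial.X * q)
      + Polynomial.C (Complex.I/2) * (Polynomial.X * (Polynomial.X * q)) := by
    unfold Pp; ring
  rw [hP, cf_add, cf_add, cf_Cmul, cf_Cmul, cf_Cmul, cf_Xmul, cf_Xmul, cf_Xmul]
  have : t - 1 - 1 = t - 2 := by ring
  rw [this]

lemma av_mul (ℓ : ℕ) (t : ℤ) :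
    av (ℓ + 1) t = Complex.I/2 * av ℓ t + (1 - Complex.I) * av ℓ (t - 1)
      + Complex.I/2 * av ℓ (t - 2) := by
  unfold av
  rw [pow_succ, mul_comm, cf_mulP]

lemma Rrel (ℓ : ℕ) (t : ℤ) :
    Complex.I/2 * ((t : ℂ) + 1) * av ℓ (t + 1) + (1 - Complex.I) * ((t : ℂ) - ℓ) * av ℓ t
      + (Complex.I/2 * ((t : ℂ) - 1) - Complex.I * ℓ) * av ℓ (t - 1) = 0 := by
  have hpoly : Pp * Polynomial.derivative (Pp ^ ℓ)
      = Polynomial.C (ℓ : ℂ) * Polynomial.derivative Pp * Pp ^ ℓ := by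
    cases ℓ with
    | zero => simp
    | succ k =>
      rw [Polynomial.derivative_pow_succ]
      push_cast
      ring
  have hdP : Polynomial.derivative Pp
      = Polynomial.C (1 - Complex.I) + Polynomial.C Complex.I * Polynomial.X := by
    unfold Pp
    rw [Polynomial.derivative_add, Polynomial.derivative_add, Polynomial.derivative_C,
      Polynomial.derivative_C_mul, Polynomial.derivative_X, Polynomial.derivative_C_mul,
      Polynomial.derivative_X_pow, pow_one, ← mul_assoc, ← Polynomial.C_mul]
    norm_num
  have h := congrArg (fun q => cf q t) hpoly
  rw [cf_mulP, hdP] at h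
  have hrw : Polynomial.C (ℓ : ℂ) * (Polynomial.C (1 - Complex.I) + Polynomial.C Complex.I * Polynomial.X) * Pp ^ ℓ
      = Polynomial.C ((ℓ : ℂ) * (1 - Complex.I)) * (Pp ^ ℓ)
        + Polynomial.C ((ℓ : ℂ) * Complex.I) * (Polynomial.X * Pp ^ ℓ) := by
    simp [Polynomial.C_mul]; ring
  rw [hrw, cf_add, cf_Cmul, cf_Cmul, cf_Xmul] at h
  rw [cf_deriv, cf_deriv, cf_deriv] at h
  have e1 : t - 1 + 1 = t := by ring
  have e2 : t - 2 + 1 = t - 1 := by ring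
  rw [e1, e2] at h
  have hc := h
  push_cast at hc
  unfold av
  push_cast
  linear_combination hc
lemma av_mul'' (k m : ℕ) (hm : m = k + 1) (t u v : ℤ) (hu : u = t - 1) (hv : v = t - 2) :
    av m t = Complex.I/2 * av k t + (1 - Complex.I) * av k u + Complex.I/2 * av k v := by
  subst hm hu hv; exact av_mul k t

lemma Rrel' (ℓ : ℕ) (t u v : ℤ) (T : ℂ) (hT : T = (t : ℂ)) (hu : u = t + 1) (hv : v = t - 1) :
    Complex.I/2 * (T + 1) * av ℓ u + (1 - Complex.I) * (T - ℓ) * av ℓ t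
      + (Complex.I/2 * (T - 1) - Complex.I * ℓ) * av ℓ v = 0 := by
  subst hT hu hv; exact Rrel ℓ t
lemma expand_one_add_X_sq :
    (1 : Polynomial ℂ) + Polynomial.X ^ 2
      = Polynomial.expand ℂ 2 ((1 : Polynomial ℂ) + Polynomial.X) := by
  rw [map_add, map_one, Polynomial.expand_X]

lemma term_coeff (ℓ r : ℕ) (N : ℕ) (hr : r ≤ ℓ) :
    ((Polynomial.C (1 - Complex.I) * Polynomial.X) ^ r *
        (Polynomial.C (Complex.I/2) * ((1 : Polynomial ℂ) + Polynomial.X ^ 2)) ^ (ℓ - r) *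
        ((ℓ.choose r : ℕ) : Polynomial ℂ)).coeff N
      = (1 - Complex.I) ^ r * (Complex.I/2) ^ (ℓ - r) *
          (if r ≤ N ∧ 2 ∣ (N - r) then (((ℓ - r).choose ((N - r) / 2) : ℕ) : ℂ) else 0) *
          (ℓ.choose r : ℂ) := by
  rw [mul_pow, mul_pow, ← Polynomial.C_pow, ← Polynomial.C_pow]
  rw [expand_one_add_X_sq, ← map_pow]
  rw [← Polynomial.C_eq_natCast]
  rw [Polynomial.coeff_mul_C]
  have hre : Polynomial.C ((1 - Complex.I) ^ r) * Polynomial.X ^ r *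
      (Polynomial.C ((Complex.I/2) ^ (ℓ - r)) *
        Polynomial.expand ℂ 2 ((1 + Polynomial.X) ^ (ℓ - r)))
      = Polynomial.C ((1 - Complex.I) ^ r * (Complex.I/2) ^ (ℓ - r)) *
        (Polynomial.X ^ r * Polynomial.expand ℂ 2 ((1 + Polynomial.X) ^ (ℓ - r))) := by
    rw [Polynomial.C_mul]; ring
  rw [hre, Polynomial.coeff_C_mul, Polynomial.coeff_X_pow_mul']
  rw [Polynomial.coeff_expand (by norm_num : 0 < 2)]
  by_cases h1 : r ≤ N
  · rw [if_pos h1]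
    by_cases h2 : 2 ∣ (N - r)
    · rw [if_pos h2, if_pos ⟨h1, h2⟩, Polynomial.coeff_one_add_X_pow]
    · rw [if_neg h2, if_neg (by tauto)]
  · rw [if_neg h1, if_neg (by tauto)]

lemma amp_eq (ℓ : ℕ) (j : ℤ) (h : j.natAbs ≤ ℓ) : amp ℓ j = av ℓ ((ℓ : ℤ) + j) := by
  have hj0 : (0 : ℤ) ≤ (ℓ : ℤ) + j := by omega
  unfold av cf
  rw [if_pos hj0]
  set N : ℕ := ((ℓ : ℤ) + j).toNat with hN
  have hNval : (N : ℤ) = (ℓ : ℤ) + j := by omega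
  have hPp : Pp = Polynomial.C (1 - Complex.I) * Polynomial.X
      + Polynomial.C (Complex.I/2) * ((1 : Polynomial ℂ) + Polynomial.X ^ 2) := by
    unfold Pp; ring
  rw [hPp, add_pow, Polynomial.finset_sum_coeff]
  unfold amp
  rw [if_pos h]
  rw [← Finset.sum_subset (Finset.range_subset_range.mpr (by omega : ℓ - j.natAbs + 1 ≤ ℓ + 1))]
  · apply Finset.sum_congr rfl
    intro r hrmem
    have hr2 : r ≤ ℓ - j.natAbs := by
      simpa using Nat.lt_succ_iff.mp (Finset.mem_range.mp hrmem)
    have hr : r ≤ ℓ := by omega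
    rw [term_coeff ℓ r N hr]
    have hdvd : (2 ∣ ((ℓ : ℤ) - r + j)) ↔ (r ≤ N ∧ 2 ∣ (N - r)) := by omega
    by_cases hd : 2 ∣ ((ℓ : ℤ) - r + j)
    · rw [if_pos hd, if_pos (hdvd.mp hd)]
      have he : ((((ℓ : ℤ) - r + j) / 2).toNat) = (N - r) / 2 := by omega
      rw [he]; ring
    · rw [if_neg hd, if_neg (by tauto)]; ring
  · intro r hrmem hrnot
    have hr : r ≤ ℓ := by
      simpa using Nat.lt_succ_iff.mp (Finset.mem_range.mp hrmem)
    have hr2 : ℓ - j.natAbs < r := by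
      simp only [Finset.mem_range, not_lt] at hrnot
      omega
    rw [term_coeff ℓ r N hr]
    by_cases h1 : r ≤ N
    · by_cases h2 : 2 ∣ (N - r)
      · rw [if_pos ⟨h1, h2⟩]
        have : (ℓ - r).choose ((N - r) / 2) = 0 := by
          apply Nat.choose_eq_zero_of_lt
          omega
        rw [this]
        push_cast
        ring
      · rw [if_neg (by tauto)]; ring
    · rw [if_neg (by tauto)]; ring
set_option maxRecDepth 10000 in
set_option maxHeartbeats 2000000 in
lemma key (ℓ : ℕ) (j : ℤ) :
    ((ℓ : ℂ) - (j : ℂ) + 4) * ((ℓ : ℂ) + (j : ℂ) + 4) * ((ℓ : ℂ) - (j : ℂ) + 3) * ((ℓ : ℂ) + (j : ℂ) + 3) * (2*(ℓ : ℂ) + 3) * av (ℓ+4) ((ℓ:ℤ) + j + 4)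
    = (3 + 4*Complex.I) * ((ℓ : ℂ)+1) * ((ℓ : ℂ)+2) * ((ℓ : ℂ)+3) * ((ℓ : ℂ)+4) * (2*(ℓ : ℂ)+7) * av ℓ ((ℓ:ℤ) + j)
      - ((ℓ : ℂ)+3) * ((ℓ : ℂ)+4) * (2*(ℓ : ℂ)+5) * ((2*(ℓ : ℂ)^2 - 2*(j : ℂ)^2 + 10*(ℓ : ℂ) + 11) + 4*Complex.I*((ℓ : ℂ)^2 + (j : ℂ)^2 + 5*(ℓ : ℂ) + 5)) * av (ℓ+2) ((ℓ:ℤ) + j + 2) := by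
  set t : ℤ := (ℓ:ℤ) + j with ht
  have M4 := av_mul'' (ℓ+3) (ℓ+4) (by omega) (t + 4) (t + 3) (t + 2) (by ring) (by ring)
  have M30 := av_mul'' (ℓ+2) (ℓ+3) (by omega) (t + 4) (t + 3) (t + 2) (by ring) (by ring)
  have M31 := av_mul'' (ℓ+2) (ℓ+3) (by omega) (t + 3) (t + 2) (t + 1) (by ring) (by ring)
  have M32 := av_mul'' (ℓ+2) (ℓ+3) (by omega) (t + 2) (t + 1) t (by ring) (by ring)
  have M20 := av_mul'' (ℓ+1) (ℓ+2) (by omega) (t + 4) (t + 3) (t + 2) (by ring) (by ring)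
  have M21 := av_mul'' (ℓ+1) (ℓ+2) (by omega) (t + 3) (t + 2) (t + 1) (by ring) (by ring)
  have M22 := av_mul'' (ℓ+1) (ℓ+2) (by omega) (t + 2) (t + 1) t (by ring) (by ring)
  have M23 := av_mul'' (ℓ+1) (ℓ+2) (by omega) (t + 1) t (t - 1) (by ring) (by ring)
  have M24 := av_mul'' (ℓ+1) (ℓ+2) (by omega) t (t - 1) (t - 2) (by ring) (by ring)
  have M10 := av_mul'' (ℓ) (ℓ+1) (by omega) (t + 4) (t + 3) (t + 2) (by ring) (by ring)
  have M11 := av_mul'' (ℓ) (ℓ+1) (by omega) (t + 3) (t + 2) (t + 1) (by ring) (by ring)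
  have M12 := av_mul'' (ℓ) (ℓ+1) (by omega) (t + 2) (t + 1) t (by ring) (by ring)
  have M13 := av_mul'' (ℓ) (ℓ+1) (by omega) (t + 1) t (t - 1) (by ring) (by ring)
  have M14 := av_mul'' (ℓ) (ℓ+1) (by omega) t (t - 1) (t - 2) (by ring) (by ring)
  have M15 := av_mul'' (ℓ) (ℓ+1) (by omega) (t - 1) (t - 2) (t - 3) (by ring) (by ring)
  have M16 := av_mul'' (ℓ) (ℓ+1) (by omega) (t - 2) (t - 3) (t - 4) (by ring) (by ring)
  have h4 : av (ℓ+4) (t + 4) = ((1/16) + (0) * Complex.I) * av ℓ (t + 4) + ((-1/2) + (-1/2) * Complex.I) * av ℓ (t + 3) + ((1/4) + (3) * Complex.I) * av ℓ (t + 2) + ((5/2) + (-11/2) * Complex.I) * av ℓ (t + 1) + ((-29/8) + (6) * Complex.I) * av ℓ t + ((5/2) + (-11/2) * Complex.I) * av ℓ (t - 1) + ((1/4) + (3) * Complex.I) * av ℓ (t - 2) + ((-1/2) + (-1/2) * Complex.I) * av ℓ (t - 3) + ((1/16) + (0) * Complex.I) * av ℓ (t - 4) := by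
    linear_combination M4 + ((0) + (1/2) * Complex.I) * M30 + ((1) + (-1) * Complex.I) * M31 + ((0) + (1/2) * Complex.I) * M32 + ((-1/4) + (0) * Complex.I) * M20 + ((1) + (1) * Complex.I) * M21 + ((-1/2) + (-2) * Complex.I) * M22 + ((1) + (1) * Complex.I) * M23 + ((-1/4) + (0) * Complex.I) * M24 + ((0) + (-1/8) * Complex.I) * M10 + ((-3/4) + (3/4) * Complex.I) * M11 + ((3) + (-3/8) * Complex.I) * M12 + ((-7/2) + (-1/2) * Complex.I) * M13 + ((3) + (-3/8) * Complex.I) * M14 + ((-3/4) + (3/4) * Complex.I) * M15 + ((0) + (-1/8) * Complex.I) * M16 + (((1/4)) * av (ℓ+2) (t + 4) + ((-1)) * av (ℓ+2) (t + 3) + ((3/2)) * av (ℓ+2) (t + 2) + ((-1)) * av (ℓ+2) (t + 1) + ((1/4)) * av (ℓ+2) t + ((1/2)) * av (ℓ+1) (t + 3) + ((-2)) * av (ℓ+1) (t + 2) + ((3)) * av (ℓ+1) (t + 1) + ((-2)) * av (ℓ+1) t + ((1/2)) * av (ℓ+1) (t - 1) + ((-1/16)) * av ℓ (t + 4) + ((1/2))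 * av ℓ (t + 3) + ((-1)) * av ℓ (t + 2) + ((1/2)) * av ℓ (t + 1) + ((1/8)) * av ℓ t + ((1/2)) * av ℓ (t - 1) + ((-1)) * av ℓ (t - 2) + ((1/2)) * av ℓ (t - 3) + ((-1/16)) * av ℓ (t - 4)) * Complex.I_sq
  have h2 : av (ℓ+2) (t + 2) = ((-1/4) + (0) * Complex.I) * av ℓ (t + 2) + ((1) + (1) * Complex.I) * av ℓ (t + 1) + ((-1/2) + (-2) * Complex.I) * av ℓ t + ((1) + (1) * Complex.I) * av ℓ (t - 1) + ((-1/4) + (0) * Complex.I) * av ℓ (t - 2) := by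
    linear_combination M22 + ((0) + (1/2) * Complex.I) * M12 + ((1) + (-1) * Complex.I) * M13 + ((0) + (1/2) * Complex.I) * M14 + (((1/4)) * av ℓ (t + 2) + ((-1)) * av ℓ (t + 1) + ((3/2)) * av ℓ t + ((-1)) * av ℓ (t - 1) + ((1/4)) * av ℓ (t - 2)) * Complex.I_sq
  have R0 := Rrel' ℓ (t - 3) (t - 2) (t - 4) ((ℓ : ℂ) + (j : ℂ) - 3) (by push_cast [ht]; ring) (by ring) (by ring)
  have R1 := Rrel' ℓ (t - 2) (t - 1) (t - 3) ((ℓ : ℂ) + (j : ℂ) - 2) (by push_cast [ht]; ring) (by ring) (by ring)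
  have R2 := Rrel' ℓ (t - 1) t (t - 2) ((ℓ : ℂ) + (j : ℂ) - 1) (by push_cast [ht]; ring) (by ring) (by ring)
  have R3 := Rrel' ℓ t (t + 1) (t - 1) ((ℓ : ℂ) + (j : ℂ) + 0) (by push_cast [ht]; ring) (by ring) (by ring)
  have R4 := Rrel' ℓ (t + 1) (t + 2) t ((ℓ : ℂ) + (j : ℂ) + 1) (by push_cast [ht]; ring) (by ring) (by ring)
  have R5 := Rrel' ℓ (t + 2) (t + 3) (t + 1) ((ℓ : ℂ) + (j : ℂ) + 2) (by push_cast [ht]; ring) (by ring) (by ring)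
  have R6 := Rrel' ℓ (t + 3) (t + 4) (t + 2) ((ℓ : ℂ) + (j : ℂ) + 3) (by push_cast [ht]; ring) (by ring) (by ring)
  linear_combination
    (((ℓ : ℂ) - (j : ℂ) + 4) * ((ℓ : ℂ) + (j : ℂ) + 4) * ((ℓ : ℂ) - (j : ℂ) + 3) * ((ℓ : ℂ) + (j : ℂ) + 3) * (2*(ℓ : ℂ) + 3)) * h4 +
    (((ℓ : ℂ)+3) * ((ℓ : ℂ)+4) * (2*(ℓ : ℂ)+5) * ((2*(ℓ : ℂ)^2 - 2*(j : ℂ)^2 + 10*(ℓ : ℂ) + 11) + 4*Complex.I*((ℓ : ℂ)^2 + (j : ℂ)^2 + 5*(ℓ : ℂ) + 5))) * h2 +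
    (((0) + (27/2) * Complex.I) + ((0) + (27/8) * Complex.I)*(j : ℂ) + ((0) + (-3/2) * Complex.I)*(j : ℂ)*(j : ℂ) + ((0) + (-3/8) * Complex.I)*(j : ℂ)*(j : ℂ)*(j : ℂ) + ((0) + (171/8) * Complex.I)*(ℓ : ℂ) + ((0) + (9/2) * Complex.I)*(ℓ : ℂ)*(j : ℂ) + ((0) + (-11/8) * Complex.I)*(ℓ : ℂ)*(j : ℂ)*(j : ℂ) + ((0) + (-1/4) * Complex.I)*(ℓ : ℂ)*(j : ℂ)*(j : ℂ)*(j : ℂ) + ((0) + (12) * Complex.I)*(ℓ : ℂ)*(ℓ : ℂ) + ((0) + (15/8) * Complex.I)*(ℓ : ℂ)*(ℓ : ℂ)*(j : ℂ) + ((0) + (-1/4) * Complex.I)*(ℓ : ℂ)*(ℓ : ℂ)*(j : ℂ)*(j : ℂ) + ((0) + (23/8) * Complex.I)*(ℓ : ℂ)*(ℓ : ℂ)*(ℓ : ℂ) + ((0) + (1/4) * Complex.I)*(ℓ : ℂ)*(ℓ : ℂ)*(ℓ : ℂ)*(j : ℂ) + ((0) + (1/4) * Complex.I)*(ℓ : ℂ)*(ℓ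 : ℂ)*(ℓ : ℂ)*(ℓ : ℂ)) * R0 +
    (((117) + (-117) * Complex.I) + ((165/4) + (-165/4) * Complex.I)*(j : ℂ) + ((-6) + (6) * Complex.I)*(j : ℂ)*(j : ℂ) + ((-9/4) + (9/4) * Complex.I)*(j : ℂ)*(j : ℂ)*(j : ℂ) + ((729/4) + (-729/4) * Complex.I)*(ℓ : ℂ) + ((209/4) + (-209/4) * Complex.I)*(ℓ : ℂ)*(j : ℂ) + ((-11/2) + (11/2) * Complex.I)*(ℓ : ℂ)*(j : ℂ)*(j : ℂ) + ((-3/2) + (3/2) * Complex.I)*(ℓ : ℂ)*(j : ℂ)*(j : ℂ)*(j : ℂ) + ((401/4) + (-401/4) * Complex.I)*(ℓ : ℂ)*(ℓ : ℂ) + ((81/4) + (-81/4) * Complex.I)*(ℓ : ℂ)*(ℓ : ℂ)*(j : ℂ) + ((-1) + (1) * Complex.I)*(ℓ : ℂ)*(ℓ : ℂ)*(j : ℂ)*(j : ℂ) + ((47/2) + (-47/2) * Complex.I)*(ℓ : ℂ)*(ℓ : ℂ)*(ℓ : ℂ) + ((5/2) + (-5/2) * Complex.I)*(ℓ : ℂ)*(ℓ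 : ℂ)*(ℓ : ℂ)*(j : ℂ) + ((2) + (-2) * Complex.I)*(ℓ : ℂ)*(ℓ : ℂ)*(ℓ : ℂ)*(ℓ : ℂ)) * R1 +
    (((-528) + (-141/2) * Complex.I) + ((-333) + (-255/8) * Complex.I)*(j : ℂ) + ((12) + (-3/2) * Complex.I)*(j : ℂ)*(j : ℂ) + ((9) + (-9/8) * Complex.I)*(j : ℂ)*(j : ℂ)*(j : ℂ) + ((-788) + (-749/8) * Complex.I)*(ℓ : ℂ) + ((-383) + (-23) * Complex.I)*(ℓ : ℂ)*(j : ℂ) + ((11) + (-11/8) * Complex.I)*(ℓ : ℂ)*(j : ℂ)*(j : ℂ) + ((6) + (-3/4) * Complex.I)*(ℓ : ℂ)*(j : ℂ)*(j : ℂ)*(j : ℂ) + ((-420) + (-91/2) * Complex.I)*(ℓ : ℂ)*(ℓ : ℂ) + ((-138) + (-39/8) * Complex.I)*(ℓ : ℂ)*(ℓ : ℂ)*(j : ℂ) + ((2) + (-1/4) * Complex.I)*(ℓ : ℂ)*(ℓ : ℂ)*(j : ℂ)*(j : ℂ) + ((-96) + (-77/8) * Complex.I)*(ℓ : ℂ)*(ℓ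 : ℂ)*(ℓ : ℂ) + ((-16) + (-1/4) * Complex.I)*(ℓ : ℂ)*(ℓ : ℂ)*(ℓ : ℂ)*(j : ℂ) + ((-8) + (-3/4) * Complex.I)*(ℓ : ℂ)*(ℓ : ℂ)*(ℓ : ℂ)*(ℓ : ℂ)) * R2 +
    (((777/2) + (783/2) * Complex.I)*(j : ℂ) + ((-21/2) + (-3/2) * Complex.I)*(j : ℂ)*(j : ℂ)*(j : ℂ) + ((903/2) + (777/2) * Complex.I)*(ℓ : ℂ)*(j : ℂ) + ((-7) + (-1) * Complex.I)*(ℓ : ℂ)*(j : ℂ)*(j : ℂ)*(j : ℂ) + ((327/2) + (249/2) * Complex.I)*(ℓ : ℂ)*(ℓ : ℂ)*(j : ℂ) + ((19) + (13) * Complex.I)*(ℓ : ℂ)*(ℓ : ℂ)*(ℓ : ℂ)*(j : ℂ)) * R3 +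
    (((528) + (141/2) * Complex.I) + ((-333) + (-255/8) * Complex.I)*(j : ℂ) + ((-12) + (3/2) * Complex.I)*(j : ℂ)*(j : ℂ) + ((9) + (-9/8) * Complex.I)*(j : ℂ)*(j : ℂ)*(j : ℂ) + ((788) + (749/8) * Complex.I)*(ℓ : ℂ) + ((-383) + (-23) * Complex.I)*(ℓ : ℂ)*(j : ℂ) + ((-11) + (11/8) * Complex.I)*(ℓ : ℂ)*(j : ℂ)*(j : ℂ) + ((6) + (-3/4) * Complex.I)*(ℓ : ℂ)*(j : ℂ)*(j : ℂ)*(j : ℂ) + ((420) + (91/2) * Complex.I)*(ℓ : ℂ)*(ℓ : ℂ) + ((-138) + (-39/8) * Complex.I)*(ℓ : ℂ)*(ℓ : ℂ)*(j : ℂ) + ((-2) + (1/4) * Complex.I)*(ℓ : ℂ)*(ℓ : ℂ)*(j : ℂ)*(j : ℂ) + ((96) + (77/8) * Complex.I)*(ℓ : ℂ)*(ℓ : ℂ)*(ℓ : ℂ) + ((-16) + (-1/4) * Complex.I)*(ℓ : ℂ)*(ℓ : ℂ)*(ℓ : ℂ)*(j : ℂ) + ((8) + (3/4) * Complex.I)*(ℓ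 : ℂ)*(ℓ : ℂ)*(ℓ : ℂ)*(ℓ : ℂ)) * R4 +
    (((-117) + (117) * Complex.I) + ((165/4) + (-165/4) * Complex.I)*(j : ℂ) + ((6) + (-6) * Complex.I)*(j : ℂ)*(j : ℂ) + ((-9/4) + (9/4) * Complex.I)*(j : ℂ)*(j : ℂ)*(j : ℂ) + ((-729/4) + (729/4) * Complex.I)*(ℓ : ℂ) + ((209/4) + (-209/4) * Complex.I)*(ℓ : ℂ)*(j : ℂ) + ((11/2) + (-11/2) * Complex.I)*(ℓ : ℂ)*(j : ℂ)*(j : ℂ) + ((-3/2) + (3/2) * Complex.I)*(ℓ : ℂ)*(j : ℂ)*(j : ℂ)*(j : ℂ) + ((-401/4) + (401/4) * Complex.I)*(ℓ : ℂ)*(ℓ : ℂ) + ((81/4) + (-81/4) * Complex.I)*(ℓ : ℂ)*(ℓ : ℂ)*(j : ℂ) + ((1) + (-1) * Complex.I)*(ℓ : ℂ)*(ℓ : ℂ)*(j : ℂ)*(j : ℂ) + ((-47/2) + (47/2) * Complex.I)*(ℓ : ℂ)*(ℓ : ℂ)*(ℓ : ℂ) + ((5/2) + (-5/2) * Complex.I)*(ℓ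 : ℂ)*(ℓ : ℂ)*(ℓ : ℂ)*(j : ℂ) + ((-2) + (2) * Complex.I)*(ℓ : ℂ)*(ℓ : ℂ)*(ℓ : ℂ)*(ℓ : ℂ)) * R5 +
    (((0) + (-27/2) * Complex.I) + ((0) + (27/8) * Complex.I)*(j : ℂ) + ((0) + (3/2) * Complex.I)*(j : ℂ)*(j : ℂ) + ((0) + (-3/8) * Complex.I)*(j : ℂ)*(j : ℂ)*(j : ℂ) + ((0) + (-171/8) * Complex.I)*(ℓ : ℂ) + ((0) + (9/2) * Complex.I)*(ℓ : ℂ)*(j : ℂ) + ((0) + (11/8) * Complex.I)*(ℓ : ℂ)*(j : ℂ)*(j : ℂ) + ((0) + (-1/4) * Complex.I)*(ℓ : ℂ)*(j : ℂ)*(j : ℂ)*(j : ℂ) + ((0) + (-12) * Complex.I)*(ℓ : ℂ)*(ℓ : ℂ) + ((0) + (15/8) * Complex.I)*(ℓ : ℂ)*(ℓ : ℂ)*(j : ℂ) + ((0) + (1/4) * Complex.I)*(ℓ : ℂ)*(ℓ : ℂ)*(j : ℂ)*(j : ℂ) + ((0) + (-23/8) * Complex.I)*(ℓ : ℂ)*(ℓ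 : ℂ)*(ℓ : ℂ) + ((0) + (1/4) * Complex.I)*(ℓ : ℂ)*(ℓ : ℂ)*(ℓ : ℂ)*(j : ℂ) + ((0) + (-1/4) * Complex.I)*(ℓ : ℂ)*(ℓ : ℂ)*(ℓ : ℂ)*(ℓ : ℂ)) * R6 +
    (((27) + (-75/16)*(j:ℂ)*(j:ℂ) + (3/16)*(j:ℂ)*(j:ℂ)*(j:ℂ)*(j:ℂ) + (99/2)*(ℓ:ℂ) + (-23/4)*(ℓ:ℂ)*(j:ℂ)*(j:ℂ) + (1/8)*(ℓ:ℂ)*(j:ℂ)*(j:ℂ)*(j:ℂ)*(j:ℂ) + (555/16)*(ℓ:ℂ)*(ℓ:ℂ) + (-17/8)*(ℓ:ℂ)*(ℓ:ℂ)*(j:ℂ)*(j:ℂ) + (47/4)*(ℓ:ℂ)*(ℓ:ℂ)*(ℓ:ℂ) + (-1/4)*(ℓ:ℂ)*(ℓ:ℂ)*(ℓ:ℂ)*(j:ℂ)*(j:ℂ) + (31/16)*(ℓ:ℂ)*(ℓ:ℂ)*(ℓ:ℂ)*(ℓ:ℂ) + (1/8)*(ℓ:ℂ)*(ℓ:ℂ)*(ℓ:ℂ)*(ℓ:ℂ)*(ℓ:ℂ))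 * av ℓ (t + 4) + ((-216) + (75/2)*(j:ℂ)*(j:ℂ) + (-3/2)*(j:ℂ)*(j:ℂ)*(j:ℂ)*(j:ℂ) + (-396)*(ℓ:ℂ) + (46)*(ℓ:ℂ)*(j:ℂ)*(j:ℂ) + (-1)*(ℓ:ℂ)*(j:ℂ)*(j:ℂ)*(j:ℂ)*(j:ℂ) + (-555/2)*(ℓ:ℂ)*(ℓ:ℂ) + (17)*(ℓ:ℂ)*(ℓ:ℂ)*(j:ℂ)*(j:ℂ) + (-94)*(ℓ:ℂ)*(ℓ:ℂ)*(ℓ:ℂ) + (2)*(ℓ:ℂ)*(ℓ:ℂ)*(ℓ:ℂ)*(j:ℂ)*(j:ℂ) + (-31/2)*(ℓ:ℂ)*(ℓ:ℂ)*(ℓ:ℂ)*(ℓ:ℂ) + (-1)*(ℓ:ℂ)*(ℓ:ℂ)*(ℓ:ℂ)*(ℓ:ℂ)*(ℓ:ℂ)) * av ℓ (t + 3) + ((177) + (69/2)*(j:ℂ) + (-42)*(j:ℂ)*(j:ℂ) + (-3/2)*(j:ℂ)*(j:ℂ)*(j:ℂ) + (3)*(j:ℂ)*(j:ℂ)*(j:ℂ)*(j:ℂ)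 + (1001/4)*(ℓ:ℂ) + (311/4)*(ℓ:ℂ)*(j:ℂ) + (-227/4)*(ℓ:ℂ)*(j:ℂ)*(j:ℂ) + (-5/2)*(ℓ:ℂ)*(j:ℂ)*(j:ℂ)*(j:ℂ) + (2)*(ℓ:ℂ)*(j:ℂ)*(j:ℂ)*(j:ℂ)*(j:ℂ) + (219/2)*(ℓ:ℂ)*(ℓ:ℂ) + (239/4)*(ℓ:ℂ)*(ℓ:ℂ)*(j:ℂ) + (-85/4)*(ℓ:ℂ)*(ℓ:ℂ)*(j:ℂ)*(j:ℂ) + (-1)*(ℓ:ℂ)*(ℓ:ℂ)*(j:ℂ)*(j:ℂ)*(j:ℂ) + (23/2)*(ℓ:ℂ)*(ℓ:ℂ)*(ℓ:ℂ) + (37/2)*(ℓ:ℂ)*(ℓ:ℂ)*(ℓ:ℂ)*(j:ℂ) + (-5/2)*(ℓ:ℂ)*(ℓ:ℂ)*(ℓ:ℂ)*(j:ℂ)*(j:ℂ) + (-11/4)*(ℓ:ℂ)*(ℓ:ℂ)*(ℓ:ℂ)*(ℓ:ℂ) + (2)*(ℓ:ℂ)*(ℓ:ℂ)*(ℓ:ℂ)*(ℓ:ℂ)*(j:ℂ)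 + (-1/2)*(ℓ:ℂ)*(ℓ:ℂ)*(ℓ:ℂ)*(ℓ:ℂ)*(ℓ:ℂ)) * av ℓ (t + 2) + ((1212) + (-195)*(j:ℂ) + (75/2)*(j:ℂ)*(j:ℂ) + (3)*(j:ℂ)*(j:ℂ)*(j:ℂ) + (-3/2)*(j:ℂ)*(j:ℂ)*(j:ℂ)*(j:ℂ) + (2441)*(ℓ:ℂ) + (-405)*(ℓ:ℂ)*(j:ℂ) + (46)*(ℓ:ℂ)*(j:ℂ)*(j:ℂ) + (5)*(ℓ:ℂ)*(j:ℂ)*(j:ℂ)*(j:ℂ) + (-1)*(ℓ:ℂ)*(j:ℂ)*(j:ℂ)*(j:ℂ)*(j:ℂ) + (3773/2)*(ℓ:ℂ)*(ℓ:ℂ) + (-282)*(ℓ:ℂ)*(ℓ:ℂ)*(j:ℂ) + (17)*(ℓ:ℂ)*(ℓ:ℂ)*(j:ℂ)*(j:ℂ) + (2)*(ℓ:ℂ)*(ℓ:ℂ)*(j:ℂ)*(j:ℂ)*(j:ℂ) + (704)*(ℓ:ℂ)*(ℓ:ℂ)*(ℓ:ℂ) + (-80)*(ℓ:ℂ)*(ℓ:ℂ)*(ℓ:ℂ)*(j:ℂ)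 + (2)*(ℓ:ℂ)*(ℓ:ℂ)*(ℓ:ℂ)*(j:ℂ)*(j:ℂ) + (255/2)*(ℓ:ℂ)*(ℓ:ℂ)*(ℓ:ℂ)*(ℓ:ℂ) + (-8)*(ℓ:ℂ)*(ℓ:ℂ)*(ℓ:ℂ)*(ℓ:ℂ)*(j:ℂ) + (9)*(ℓ:ℂ)*(ℓ:ℂ)*(ℓ:ℂ)*(ℓ:ℂ)*(ℓ:ℂ)) * av ℓ (t + 1) + ((-2400) + (-453/8)*(j:ℂ)*(j:ℂ) + (-3/8)*(j:ℂ)*(j:ℂ)*(j:ℂ)*(j:ℂ) + (-9379/2)*(ℓ:ℂ) + (-59)*(ℓ:ℂ)*(j:ℂ)*(j:ℂ) + (-1/4)*(ℓ:ℂ)*(j:ℂ)*(j:ℂ)*(j:ℂ)*(j:ℂ) + (-28051/8)*(ℓ:ℂ)*(ℓ:ℂ) + (-85/4)*(ℓ:ℂ)*(ℓ:ℂ)*(j:ℂ)*(j:ℂ) + (-2533/2)*(ℓ:ℂ)*(ℓ:ℂ)*(ℓ:ℂ) + (-5/2)*(ℓ:ℂ)*(ℓ:ℂ)*(ℓ:ℂ)*(j:ℂ)*(j:ℂ)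 + (-1779/8)*(ℓ:ℂ)*(ℓ:ℂ)*(ℓ:ℂ)*(ℓ:ℂ) + (-61/4)*(ℓ:ℂ)*(ℓ:ℂ)*(ℓ:ℂ)*(ℓ:ℂ)*(ℓ:ℂ)) * av ℓ t + ((1212) + (195)*(j:ℂ) + (75/2)*(j:ℂ)*(j:ℂ) + (-3)*(j:ℂ)*(j:ℂ)*(j:ℂ) + (-3/2)*(j:ℂ)*(j:ℂ)*(j:ℂ)*(j:ℂ) + (2441)*(ℓ:ℂ) + (405)*(ℓ:ℂ)*(j:ℂ) + (46)*(ℓ:ℂ)*(j:ℂ)*(j:ℂ) + (-5)*(ℓ:ℂ)*(j:ℂ)*(j:ℂ)*(j:ℂ) + (-1)*(ℓ:ℂ)*(j:ℂ)*(j:ℂ)*(j:ℂ)*(j:ℂ) + (3773/2)*(ℓ:ℂ)*(ℓ:ℂ) + (282)*(ℓ:ℂ)*(ℓ:ℂ)*(j:ℂ) + (17)*(ℓ:ℂ)*(ℓ:ℂ)*(j:ℂ)*(j:ℂ) + (-2)*(ℓ:ℂ)*(ℓ:ℂ)*(j:ℂ)*(j:ℂ)*(j:ℂ) + (704)*(ℓ:ℂ)*(ℓ:ℂ)*(ℓ:ℂ)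 + (80)*(ℓ:ℂ)*(ℓ:ℂ)*(ℓ:ℂ)*(j:ℂ) + (2)*(ℓ:ℂ)*(ℓ:ℂ)*(ℓ:ℂ)*(j:ℂ)*(j:ℂ) + (255/2)*(ℓ:ℂ)*(ℓ:ℂ)*(ℓ:ℂ)*(ℓ:ℂ) + (8)*(ℓ:ℂ)*(ℓ:ℂ)*(ℓ:ℂ)*(ℓ:ℂ)*(j:ℂ) + (9)*(ℓ:ℂ)*(ℓ:ℂ)*(ℓ:ℂ)*(ℓ:ℂ)*(ℓ:ℂ)) * av ℓ (t - 1) + ((177) + (-69/2)*(j:ℂ) + (-42)*(j:ℂ)*(j:ℂ) + (3/2)*(j:ℂ)*(j:ℂ)*(j:ℂ) + (3)*(j:ℂ)*(j:ℂ)*(j:ℂ)*(j:ℂ) + (1001/4)*(ℓ:ℂ) + (-311/4)*(ℓ:ℂ)*(j:ℂ) + (-227/4)*(ℓ:ℂ)*(j:ℂ)*(j:ℂ) + (5/2)*(ℓ:ℂ)*(j:ℂ)*(j:ℂ)*(j:ℂ) + (2)*(ℓ:ℂ)*(j:ℂ)*(j:ℂ)*(j:ℂ)*(j:ℂ) + (219/2)*(ℓ:ℂ)*(ℓ:ℂ)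 + (-239/4)*(ℓ:ℂ)*(ℓ:ℂ)*(j:ℂ) + (-85/4)*(ℓ:ℂ)*(ℓ:ℂ)*(j:ℂ)*(j:ℂ) + (1)*(ℓ:ℂ)*(ℓ:ℂ)*(j:ℂ)*(j:ℂ)*(j:ℂ) + (23/2)*(ℓ:ℂ)*(ℓ:ℂ)*(ℓ:ℂ) + (-37/2)*(ℓ:ℂ)*(ℓ:ℂ)*(ℓ:ℂ)*(j:ℂ) + (-5/2)*(ℓ:ℂ)*(ℓ:ℂ)*(ℓ:ℂ)*(j:ℂ)*(j:ℂ) + (-11/4)*(ℓ:ℂ)*(ℓ:ℂ)*(ℓ:ℂ)*(ℓ:ℂ) + (-2)*(ℓ:ℂ)*(ℓ:ℂ)*(ℓ:ℂ)*(ℓ:ℂ)*(j:ℂ) + (-1/2)*(ℓ:ℂ)*(ℓ:ℂ)*(ℓ:ℂ)*(ℓ:ℂ)*(ℓ:ℂ)) * av ℓ (t - 2) + ((-216) + (75/2)*(j:ℂ)*(j:ℂ) + (-3/2)*(j:ℂ)*(j:ℂ)*(j:ℂ)*(j:ℂ) + (-396)*(ℓ:ℂ) + (46)*(ℓ:ℂ)*(j:ℂ)*(j:ℂ)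 + (-1)*(ℓ:ℂ)*(j:ℂ)*(j:ℂ)*(j:ℂ)*(j:ℂ) + (-555/2)*(ℓ:ℂ)*(ℓ:ℂ) + (17)*(ℓ:ℂ)*(ℓ:ℂ)*(j:ℂ)*(j:ℂ) + (-94)*(ℓ:ℂ)*(ℓ:ℂ)*(ℓ:ℂ) + (2)*(ℓ:ℂ)*(ℓ:ℂ)*(ℓ:ℂ)*(j:ℂ)*(j:ℂ) + (-31/2)*(ℓ:ℂ)*(ℓ:ℂ)*(ℓ:ℂ)*(ℓ:ℂ) + (-1)*(ℓ:ℂ)*(ℓ:ℂ)*(ℓ:ℂ)*(ℓ:ℂ)*(ℓ:ℂ)) * av ℓ (t - 3) + ((27) + (-75/16)*(j:ℂ)*(j:ℂ) + (3/16)*(j:ℂ)*(j:ℂ)*(j:ℂ)*(j:ℂ) + (99/2)*(ℓ:ℂ) + (-23/4)*(ℓ:ℂ)*(j:ℂ)*(j:ℂ) + (1/8)*(ℓ:ℂ)*(j:ℂ)*(j:ℂ)*(j:ℂ)*(j:ℂ) + (555/16)*(ℓ:ℂ)*(ℓ:ℂ) + (-17/8)*(ℓ:ℂ)*(ℓ:ℂ)*(j:ℂ)*(j:ℂ)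 + (47/4)*(ℓ:ℂ)*(ℓ:ℂ)*(ℓ:ℂ) + (-1/4)*(ℓ:ℂ)*(ℓ:ℂ)*(ℓ:ℂ)*(j:ℂ)*(j:ℂ) + (31/16)*(ℓ:ℂ)*(ℓ:ℂ)*(ℓ:ℂ)*(ℓ:ℂ) + (1/8)*(ℓ:ℂ)*(ℓ:ℂ)*(ℓ:ℂ)*(ℓ:ℂ)*(ℓ:ℂ)) * av ℓ (t - 4)) * Complex.I_sq

lemma factor_ne (a b : ℤ) (hb : b ≠ 0) (x : ℂ) (hx : (b : ℂ) * x = (a : ℤ)) (ha : a ≠ 0) :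
    x ≠ 0 := by
  intro h0
  rw [h0, mul_zero] at hx
  exact ha (by exact_mod_cast hx.symm)

/-- Second order linear recursions in `ℓ` (with `j` fixed) for `μ_ℓ(j)`,
obtained by Zeilberger's algorithm. -/
theorem amp_recursion (n : ℕ) :
    (∀ j : ℤ, j.natAbs ≤ 2 * n →
      amp (2 * n + 4) j =
        (3 + 4 * Complex.I) *
            (((n : ℂ) + 1) * ((n : ℂ) + 2) * ((n : ℂ) + 1 / 2) * ((n : ℂ) + 3 / 2) *
              ((n : ℂ) + 7 / 4)) /
            (((n : ℂ) - (j : ℂ) / 2 + 2) * ((n : ℂ) + (j : ℂ) / 2 + 2) *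
              ((n : ℂ) - (j : ℂ) / 2 + 3 / 2) * ((n : ℂ) + (j : ℂ) / 2 + 3 / 2) *
              ((n : ℂ) + 3 / 4)) * amp (2 * n) j -
          (2 + 4 * Complex.I) *
            (((n : ℂ) + 2) * ((n : ℂ) + 3 / 2) * ((n : ℂ) + 5 / 4) *
              ((n : ℂ) ^ 2 + 3 / 20 * (j : ℂ) ^ 2 + 5 / 2 * (n : ℂ) + 51 / 40 +
                Complex.I * (4 / 20 * (j : ℂ) ^ 2 - 1 / 20))) /
            (((n : ℂ) - (j : ℂ) / 2 + 2) * ((n : ℂ) + (j : ℂ) / 2 + 2) *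
              ((n : ℂ) - (j : ℂ) / 2 + 3 / 2) * ((n : ℂ) + (j : ℂ) / 2 + 3 / 2) *
              ((n : ℂ) + 3 / 4)) * amp (2 * n + 2) j) ∧
    (∀ j : ℤ, j.natAbs ≤ 2 * n + 1 →
      amp (2 * n + 5) j =
        (3 + 4 * Complex.I) *
            (((n : ℂ) + 1) * ((n : ℂ) + 2) * ((n : ℂ) + 3 / 2) * ((n : ℂ) + 5 / 2) *
              ((n : ℂ) + 9 / 4)) /
            (((n : ℂ) - (j : ℂ) / 2 + 2) * ((n : ℂ) + (j : ℂ) / 2 + 2) *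
              ((n : ℂ) - (j : ℂ) / 2 + 5 / 2) * ((n : ℂ) + (j : ℂ) / 2 + 5 / 2) *
              ((n : ℂ) + 5 / 4)) * amp (2 * n + 1) j -
          (2 + 4 * Complex.I) *
            (((n : ℂ) + 2) * ((n : ℂ) + 5 / 2) * ((n : ℂ) + 7 / 4) *
              ((n : ℂ) ^ 2 + 3 / 20 * (j : ℂ) ^ 2 + 7 / 2 * (n : ℂ) + 111 / 40 +
                Complex.I * (4 / 20 * (j : ℂ) ^ 2 - 1 / 20))) /
            (((n : ℂ) - (j : ℂ) / 2 + 2) * ((n : ℂ) + (j : ℂ) / 2 + 2) *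
              ((n : ℂ) - (j : ℂ) / 2 + 5 / 2) * ((n : ℂ) + (j : ℂ) / 2 + 5 / 2) *
              ((n : ℂ) + 5 / 4)) * amp (2 * n + 3) j) := by

  constructor
  · intro j hj
    rw [amp_eq (2 * n + 4) j (by omega), amp_eq (2 * n) j (by omega),
      amp_eq (2 * n + 2) j (by omega)]
    have e2 : ((2 * n + 2 : ℕ) : ℤ) + j = ((2 * n : ℕ) : ℤ) + j + 2 := by push_cast; ring
    have e4 : ((2 * n + 4 : ℕ) : ℤ) + j = ((2 * n : ℕ) : ℤ) + j + 4 := by push_cast; ring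
    rw [e2, e4]
    have hkey := key (2 * n) j
    have f1 : ((n : ℂ) - (j : ℂ) / 2 + 2) ≠ 0 :=
      factor_ne (2 * (n : ℤ) - j + 4) 2 (by norm_num) _ (by push_cast; ring) (by omega)
    have f2 : ((n : ℂ) + (j : ℂ) / 2 + 2) ≠ 0 :=
      factor_ne (2 * (n : ℤ) + j + 4) 2 (by norm_num) _ (by push_cast; ring) (by omega)
    have f3 : ((n : ℂ) - (j : ℂ) / 2 + 3 / 2) ≠ 0 :=
      factor_ne (2 * (n : ℤ) - j + 3) 2 (by norm_num) _ (by push_cast; ring) (by omega)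
    have f4 : ((n : ℂ) + (j : ℂ) / 2 + 3 / 2) ≠ 0 :=
      factor_ne (2 * (n : ℤ) + j + 3) 2 (by norm_num) _ (by push_cast; ring) (by omega)
    have f5 : ((n : ℂ) + 3 / 4) ≠ 0 :=
      factor_ne (4 * (n : ℤ) + 3) 4 (by norm_num) _ (by push_cast; ring) (by omega)
    have hD := mul_ne_zero (mul_ne_zero (mul_ne_zero (mul_ne_zero f1 f2) f3) f4) f5
    rw [div_mul_eq_mul_div, div_mul_eq_mul_div, div_sub_div_same, eq_div_iff hD]
    push_cast at hkey ⊢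
    linear_combination (1 / 64 : ℂ) * hkey +
      (4 * ((n : ℂ) + 2) * ((n : ℂ) + 3 / 2) * ((n : ℂ) + 5 / 4) *
        (4 / 20 * (j : ℂ) ^ 2 - 1 / 20)) * av (2 * n + 2) (2 * (n : ℤ) + j + 2) * Complex.I_sq
  · intro j hj
    rw [amp_eq (2 * n + 5) j (by omega), amp_eq (2 * n + 1) j (by omega),
      amp_eq (2 * n + 3) j (by omega)]
    have e2 : ((2 * n + 3 : ℕ) : ℤ) + j = ((2 * n + 1 : ℕ) : ℤ) + j + 2 := by push_cast; ring
    have e4 : ((2 * n + 5 : ℕ) : ℤ) + j = ((2 * n + 1 : ℕ) : ℤ) + j + 4 := by push_cast; ring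
    rw [e2, e4]
    have hkey := key (2 * n + 1) j
    simp only [show 2 * n + 1 + 4 = 2 * n + 5 by omega, show 2 * n + 1 + 2 = 2 * n + 3 by omega]
      at hkey
    have f1 : ((n : ℂ) - (j : ℂ) / 2 + 2) ≠ 0 :=
      factor_ne (2 * (n : ℤ) - j + 4) 2 (by norm_num) _ (by push_cast; ring) (by omega)
    have f2 : ((n : ℂ) + (j : ℂ) / 2 + 2) ≠ 0 :=
      factor_ne (2 * (n : ℤ) + j + 4) 2 (by norm_num) _ (by push_cast; ring) (by omega)
    have f3 : ((n : ℂ) - (j : ℂ) / 2 + 5 / 2) ≠ 0 :=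
      factor_ne (2 * (n : ℤ) - j + 5) 2 (by norm_num) _ (by push_cast; ring) (by omega)
    have f4 : ((n : ℂ) + (j : ℂ) / 2 + 5 / 2) ≠ 0 :=
      factor_ne (2 * (n : ℤ) + j + 5) 2 (by norm_num) _ (by push_cast; ring) (by omega)
    have f5 : ((n : ℂ) + 5 / 4) ≠ 0 :=
      factor_ne (4 * (n : ℤ) + 5) 4 (by norm_num) _ (by push_cast; ring) (by omega)
    have hD := mul_ne_zero (mul_ne_zero (mul_ne_zero (mul_ne_zero f1 f2) f3) f4) f5
    rw [div_mul_eq_mul_div, div_mul_eq_mul_div, div_sub_div_same, eq_div_iff hD]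
    push_cast at hkey ⊢
    linear_combination (1 / 64 : ℂ) * hkey +
      (4 * ((n : ℂ) + 2) * ((n : ℂ) + 5 / 2) * ((n : ℂ) + 7 / 4) *
        (4 / 20 * (j : ℂ) ^ 2 - 1 / 20)) * av (2 * n + 3) (2 * (n : ℤ) + 1 + j + 2) * Complex.I_sq
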